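/- arXiv:2103.03403 — 4 statements merged into one kernel-verified Lean document; each statement's English description precedes it below -/
import Mathlib

section
/- Let μ, ε > 0 with μ > ε·e. Then there exists δ > 0 with δ ∈ [μ²/(4ε) − μ, μ²/(4ε)] satisfying Γ(2δ/μ) = (μ/(eε))·e^{−2δ/μ}, where Γ(t) = Σ_{j=0}^{⌊t⌋+1} ((-1)^j e^{-j}/j!)·(t+1-j)^j. -/
open Real

/-- `Γ(t) = Σ_{j=0}^{⌊t⌋+1} ((−1)ʲ e⁻ʲ/j!)·(t + 1 − j)ʲ`. -/
noncomputable def GammaDDE (t : ℝ) : ℝ :=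
  ∑ j ∈ Finset.range (⌊t⌋₊ + 2),
    ((-1 : ℝ) ^ j * Real.exp (-(j : ℝ)) / (Nat.factorial j)) * (t + 1 - (j : ℝ)) ^ j

open Set

noncomputable def Fp (n : ℕ) (t : ℝ) : ℝ :=
  ∑ j ∈ Finset.range (n + 2),
    ((-1 : ℝ) ^ j * Real.exp (-(j : ℝ)) / (Nat.factorial j)) * (t + 1 - (j : ℝ)) ^ j

lemma gamma_eq_Fp (t : ℝ) : GammaDDE t = Fp ⌊t⌋₊ t := rfl

lemma Fp_cont (n : ℕ) : Continuous (Fp n) := by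
  unfold Fp
  exact continuous_finset_sum _ fun j _ => (continuous_const.mul
    (((continuous_id.add continuous_const).sub continuous_const).pow j))

lemma Fp_succ (n : ℕ) (t : ℝ) :
    Fp (n + 1) t = Fp n t +
      ((-1 : ℝ) ^ (n+2) * Real.exp (-((n:ℝ)+2)) / (Nat.factorial (n+2))) * (t + 1 - ((n:ℝ)+2)) ^ (n+2) := by
  unfold Fp
  rw [Finset.sum_range_succ]
  push_cast
  congr 1

lemma gamma_eq_on (n : ℕ) (t : ℝ) (h1 : (n : ℝ) ≤ t) (h2 : t ≤ (n : ℝ) + 1) :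
    GammaDDE t = Fp n t := by
  rcases eq_or_lt_of_le h2 with he | hlt
  · have hfl : ⌊t⌋₊ = n + 1 := by
      rw [he]; exact_mod_cast Nat.floor_natCast (n+1)
    rw [gamma_eq_Fp, hfl, Fp_succ, he]
    have : ((n:ℝ) + 1 + 1 - ((n:ℝ)+2)) = 0 := by ring
    rw [this, zero_pow (by omega), mul_zero, add_zero]
  · have hfl : ⌊t⌋₊ = n := (Nat.floor_eq_iff (le_trans (Nat.cast_nonneg n) h1)).mpr ⟨h1, hlt⟩
    rw [gamma_eq_Fp, hfl]

lemma gamma_eq_of_lt_one (t : ℝ) (h : t < 1) : GammaDDE t = Fp 0 t := by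
  rw [gamma_eq_Fp, Nat.floor_eq_zero.mpr h]

lemma gamma_cont : Continuous GammaDDE := by
  rw [continuous_iff_continuousAt]
  intro x
  rcases lt_or_ge x 1 with hx | hx
  · -- locally equal to Fp 0 on Iio 1
    have : GammaDDE =ᶠ[nhds x] Fp 0 :=
      Filter.eventuallyEq_of_mem (Iio_mem_nhds hx) (fun t ht => gamma_eq_of_lt_one t ht)
    exact (Fp_cont 0).continuousAt.congr this.symm
  · rw [← continuousWithinAt_univ, ← Iic_union_Ici (a := x)]
    apply ContinuousWithinAt.union
    · -- left: piece k = ⌈x⌉₊ - 1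
      have hx0 : (0:ℝ) ≤ x := le_trans zero_le_one hx
      set m := ⌈x⌉₊ with hm
      have hm1 : 1 ≤ m := by
        rw [hm]; exact Nat.one_le_ceil_iff.mpr (lt_of_lt_of_le zero_lt_one hx)
      set k := m - 1 with hk
      have hkm : (k : ℝ) = (m : ℝ) - 1 := by
        rw [hk]; push_cast [Nat.cast_sub hm1]; ring
      have hxle : x ≤ (k : ℝ) + 1 := by
        rw [hkm]; have := Nat.le_ceil x; linarith
      have hkx : (k : ℝ) < x := by
        rw [hkm]
        have := Nat.ceil_lt_add_one hx0
        linarith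
      have heq : ∀ t ∈ Ioc (k:ℝ) x, GammaDDE t = Fp k t := fun t ht =>
        gamma_eq_on k t (le_of_lt ht.1) (le_trans ht.2 hxle)
      have h1 : ContinuousWithinAt GammaDDE (Ioc (k:ℝ) x) x := by
        apply ((Fp_cont k).continuousAt.continuousWithinAt).congr heq
        exact gamma_eq_on k x (le_of_lt hkx) hxle
      have : Ioc (k:ℝ) x = Iic x ∩ Ioi (k:ℝ) := by
        ext t; simp [Ioc, Iic, Ioi, and_comm]
      rw [this] at h1
      exact (continuousWithinAt_inter (Ioi_mem_nhds hkx)).mp h1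
    · -- right: piece n = ⌊x⌋₊
      have hx0 : (0:ℝ) ≤ x := le_trans zero_le_one hx
      set n := ⌊x⌋₊ with hn
      have hnx : (n : ℝ) ≤ x := Nat.floor_le hx0
      have hxn : x < (n : ℝ) + 1 := Nat.lt_floor_add_one x
      have heq : ∀ t ∈ Ico x ((n:ℝ)+1), GammaDDE t = Fp n t := fun t ht =>
        gamma_eq_on n t (le_trans hnx ht.1) (le_of_lt ht.2)
      have h1 : ContinuousWithinAt GammaDDE (Ico x ((n:ℝ)+1)) x := by
        apply ((Fp_cont n).continuousAt.continuousWithinAt).congr heq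
        exact gamma_eq_on n x hnx (le_of_lt hxn)
      have : Ico x ((n:ℝ)+1) = Ici x ∩ Iio ((n:ℝ)+1) := by
        ext t; simp [Ico, Ici, Iio]
      rw [this] at h1
      exact (continuousWithinAt_inter (Iio_mem_nhds hxn)).mp h1

lemma Fp_hasDerivAt (n : ℕ) (t : ℝ) :
    HasDerivAt (Fp (n + 1)) (-(Real.exp 1)⁻¹ * Fp n (t - 1)) t := by
  have h : ∀ j : ℕ, HasDerivAt (fun s : ℝ => ((-1 : ℝ) ^ j * Real.exp (-(j : ℝ)) / (Nat.factorial j)) * (s + 1 - (j : ℝ)) ^ j)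
      (((-1 : ℝ) ^ j * Real.exp (-(j : ℝ)) / (Nat.factorial j)) * (j * (t + 1 - (j : ℝ)) ^ (j - 1))) t := by
    intro j
    have base : HasDerivAt (fun s : ℝ => s + 1 - (j : ℝ)) 1 t := by
      simpa using ((hasDerivAt_id t).add_const 1).sub_const (j : ℝ)
    have := (base.pow j)
    simpa [mul_comm] using this.const_mul ((-1 : ℝ) ^ j * Real.exp (-(j : ℝ)) / (Nat.factorial j))
  have hsum : HasDerivAt (Fp (n+1))
      (∑ j ∈ Finset.range (n + 3), ((-1 : ℝ) ^ j * Real.exp (-(j : ℝ)) / (Nat.factorial j)) * (j * (t + 1 - (j : ℝ)) ^ (j - 1))) t := by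
    have : Fp (n+1) = fun s => ∑ j ∈ Finset.range (n + 3),
        ((-1 : ℝ) ^ j * Real.exp (-(j : ℝ)) / (Nat.factorial j)) * (s + 1 - (j : ℝ)) ^ j := by
      funext s; rfl
    rw [this]
    exact HasDerivAt.fun_sum (fun j _ => h j)
  convert hsum using 1
  rw [Finset.sum_range_succ' _ (n+2)]
  simp only [Nat.cast_zero, CharP.cast_eq_zero, pow_zero, Nat.factorial_zero, mul_zero, zero_mul, add_zero,
    Nat.cast_ofNat]
  have : ∀ k ∈ Finset.range (n+2), ((-1 : ℝ) ^ (k+1) * Real.exp (-((k:ℝ)+1)) / (Nat.factorial (k+1))) * (((k:ℝ)+1) * (t + 1 - ((k:ℝ)+1)) ^ k)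
      = -(Real.exp 1)⁻¹ * (((-1 : ℝ) ^ k * Real.exp (-(k : ℝ)) / (Nat.factorial k)) * ((t - 1) + 1 - (k:ℝ)) ^ k) := by
    intro k _
    have hfac : (Nat.factorial (k+1) : ℝ) = ((k:ℝ)+1) * (Nat.factorial k) := by
      push_cast [Nat.factorial_succ]; ring
    have hexp : Real.exp (-((k:ℝ)+1)) = Real.exp (-(k:ℝ)) * (Real.exp 1)⁻¹ := by
      rw [← Real.exp_neg]; rw [← Real.exp_add]; ring_nf
    have hpow : (t + 1 - ((k:ℝ)+1)) = ((t-1) + 1 - (k:ℝ)) := by ring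
    have hfk : (Nat.factorial k : ℝ) ≠ 0 := Nat.cast_ne_zero.mpr (Nat.factorial_ne_zero k)
    have hk1 : ((k:ℝ)+1) ≠ 0 := by positivity
    rw [hpow, hfac, hexp, pow_succ]
    field_simp
  rw [Finset.sum_congr rfl (by
    intro k hk
    have := this k hk
    push_cast at this ⊢
    exact this)]
  rw [← Finset.mul_sum]
  rfl

lemma gamma_hasDerivWithinAt {t : ℝ} (ht : 1 ≤ t) :
    HasDerivWithinAt GammaDDE (-(Real.exp 1)⁻¹ * GammaDDE (t - 1)) (Ici t) t := by
  obtain ⟨n, hn⟩ : ∃ n, ⌊t⌋₊ = n := ⟨⌊t⌋₊, rfl⟩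
  have ht0 : (0:ℝ) ≤ t := le_trans zero_le_one ht
  have hn1 : 1 ≤ n := hn ▸ Nat.le_floor (by exact_mod_cast ht)
  obtain ⟨m, rfl⟩ : ∃ m, n = m + 1 := ⟨n - 1, by omega⟩
  have hnt : ((m:ℝ) + 1) ≤ t := by have := Nat.floor_le ht0; rw [hn] at this; exact_mod_cast this
  have htn : t < (m:ℝ) + 1 + 1 := by have := Nat.lt_floor_add_one t; rw [hn] at this; exact_mod_cast this
  -- Γ = Fp (m+1) on a right-neighborhood of t
  have hder : HasDerivAt (Fp (m+1)) (-(Real.exp 1)⁻¹ * Fp m (t - 1)) t := Fp_hasDerivAt m t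
  have hFg : Fp m (t-1) = GammaDDE (t-1) := by
    rw [gamma_eq_on m (t-1) (by push_cast at hnt ⊢; linarith) (by push_cast at htn ⊢; linarith)]
  rw [hFg] at hder
  have hev : GammaDDE =ᶠ[nhdsWithin t (Ici t)] Fp (m+1) := by
    have hmem : Ico t ((m:ℝ)+1+1) ∈ nhdsWithin t (Ici t) := by
      rw [← Ici_inter_Iio]
      exact inter_mem_nhdsWithin _ (Iio_mem_nhds htn)
    exact Filter.eventuallyEq_of_mem hmem (fun s hs => by
      have h1 : ((m:ℝ)+1) ≤ s := le_trans hnt hs.1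
      have h2 : s ≤ ((m:ℝ)+1) + 1 := le_of_lt hs.2
      exact_mod_cast gamma_eq_on (m+1) s (by push_cast; push_cast at h1; linarith)
        (by push_cast; push_cast at h2; linarith))
  have hx : GammaDDE t = Fp (m+1) t :=
    gamma_eq_on (m+1) t (by exact_mod_cast hnt) (by push_cast; push_cast at htn; linarith)
  exact (hder.hasDerivWithinAt).congr_of_eventuallyEq hev hx

noncomputable def uG (t : ℝ) : ℝ := GammaDDE t * Real.exp t

lemma uG_cont : Continuous uG := gamma_cont.mul continuous_exp

lemma Fp0_eq (s : ℝ) : Fp 0 s = 1 - Real.exp (-1) * s := by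
  unfold Fp
  rw [Finset.sum_range_succ, Finset.sum_range_succ]
  norm_num
  ring

lemma uG_hasDerivWithinAt {t : ℝ} (ht : 1 ≤ t) :
    HasDerivWithinAt uG
      (-(Real.exp 1)⁻¹ * GammaDDE (t-1) * Real.exp t + GammaDDE t * Real.exp t) (Ici t) t := by
  exact (gamma_hasDerivWithinAt ht).mul ((Real.hasDerivAt_exp t).hasDerivWithinAt)

lemma integral_uG {x y : ℝ} (hx : -1 ≤ x) (hy : y ≤ 1) (hxy : x ≤ y) :
    ∫ s in x..y, uG s = (1 - (y-1)*Real.exp (-1)) * Real.exp y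
      - (1 - (x-1)*Real.exp (-1)) * Real.exp x := by
  have hcongr : EqOn uG (fun s => (1 - Real.exp (-1) * s) * Real.exp s) (uIcc x y) := by
    intro s hs
    rw [uIcc_of_le hxy] at hs
    unfold uG
    rcases lt_or_eq_of_le (le_trans hs.2 hy) with h | h
    · rw [gamma_eq_of_lt_one s h, Fp0_eq]
    · subst h
      rw [show GammaDDE 1 = Fp 0 1 from gamma_eq_on 0 1 (by norm_num) (by norm_num), Fp0_eq]
  rw [intervalIntegral.integral_congr hcongr]
  have hderiv : ∀ s ∈ uIcc x y, HasDerivAt (fun s : ℝ => (1 - (s-1)*Real.exp (-1)) * Real.exp s)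
      ((1 - Real.exp (-1) * s) * Real.exp s) s := by
    intro s _
    have h1 : HasDerivAt (fun s : ℝ => 1 - (s-1)*Real.exp (-1)) (-Real.exp (-1)) s := by
      simpa [mul_comm] using (((hasDerivAt_id s).sub_const 1).const_mul (Real.exp (-1))).const_sub 1
    have := h1.fun_mul (Real.hasDerivAt_exp s)
    refine this.congr_deriv ?_
    ring
  rw [intervalIntegral.integral_eq_sub_of_hasDerivAt hderiv
    (Continuous.intervalIntegrable (by continuity) x y)]

lemma uG_int {t : ℝ} (ht : 1 ≤ t) :
    uG t = (Real.exp 1)⁻¹ + ∫ s in (t-1)..t, uG s := by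
  set Phi : ℝ → ℝ := fun x => ∫ s in (0:ℝ)..x, uG s with hPhidef
  have hPhi : ∀ x : ℝ, HasDerivAt Phi (uG x) x := fun x =>
    intervalIntegral.integral_hasDerivAt_right
      (uG_cont.intervalIntegrable 0 x)
      (uG_cont.stronglyMeasurable.stronglyMeasurableAtFilter)
      uG_cont.continuousAt
  have hPhicont : Continuous Phi := by
    apply continuous_iff_continuousAt.mpr
    exact fun x => (hPhi x).continuousAt
  set H : ℝ → ℝ := fun x => uG x - Phi x + Phi (x - 1) with hHdef
  have hHconst : ∀ x ∈ Icc (1:ℝ) t, H x = H 1 := by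
    apply constant_of_has_deriv_right_zero
    · exact (uG_cont.sub hPhicont |>.add (hPhicont.comp (continuous_id.sub continuous_const))).continuousOn
    · intro x hx
      have hx1 : 1 ≤ x := hx.1
      have h1 := uG_hasDerivWithinAt hx1
      have h2 : HasDerivWithinAt Phi (uG x) (Ici x) x := (hPhi x).hasDerivWithinAt
      have h3' := (hPhi (x-1)).comp x ((hasDerivAt_id x).sub_const 1)
      have h3 : HasDerivWithinAt (fun y => Phi (y - 1)) (uG (x-1)) (Ici x) x := by
        have h4 : HasDerivAt (fun y => Phi (y - 1)) (uG (x-1)) x := by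
          simpa [Function.comp_def] using h3'
        exact h4.hasDerivWithinAt
      have := (h1.sub h2).add h3
      convert this using 1
      · rfl
      unfold uG
      have : Real.exp (x - 1) = Real.exp x * (Real.exp 1)⁻¹ := by
        rw [Real.exp_sub]; field_simp
      rw [this]
      ring
  have hHt : H t = H 1 := hHconst t ⟨ht, le_refl t⟩
  have hH1 : H 1 = (Real.exp 1)⁻¹ := by
    have h0 : Phi 0 = 0 := by show (∫ s in (0:ℝ)..(0:ℝ), uG s) = 0; simp
    have hPhi1 : Phi 1 = Real.exp 1 - 1 - (Real.exp 1)⁻¹ := by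
      show (∫ s in (0:ℝ)..1, uG s) = _
      rw [integral_uG (by norm_num) (le_refl 1) (by norm_num)]
      rw [Real.exp_zero, Real.exp_neg]
      ring
    have hu1 : uG 1 = Real.exp 1 - 1 := by
      unfold uG
      rw [show GammaDDE 1 = Fp 0 1 from gamma_eq_on 0 1 (by norm_num) (by norm_num), Fp0_eq,
        Real.exp_neg]
      field_simp
    show uG 1 - Phi 1 + Phi (1-1) = _
    rw [hu1, hPhi1]
    norm_num [h0]
  have hsplit : Phi t - Phi (t-1) = ∫ s in (t-1)..t, uG s := by
    have := intervalIntegral.integral_add_adjacent_intervals (μ := MeasureTheory.volume)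
      (uG_cont.intervalIntegrable 0 (t-1)) (uG_cont.intervalIntegrable (t-1) t)
    show (∫ s in (0:ℝ)..t, uG s) - (∫ s in (0:ℝ)..(t-1), uG s) = _
    rw [← this]; ring
  have : uG t - Phi t + Phi (t-1) = (Real.exp 1)⁻¹ := hHt.trans hH1
  linarith [hsplit, this]

lemma prop_nonpos (g : ℝ → ℝ) (hg : Continuous g) (m : ℕ) (hm : 1 ≤ m)
    (hid : ∀ t : ℝ, 1 ≤ t → g t = ∫ s in (t-1)..t, g s)
    (hyp : ∀ s ∈ Icc (0:ℝ) (m:ℝ), g s ≤ 0) :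
    ∀ t ∈ Icc (m:ℝ) ((m:ℝ)+1), g t ≤ 0 := by
  have hm1 : (1:ℝ) ≤ (m:ℝ) := by exact_mod_cast hm
  set P : ℝ → ℝ := fun x => ∫ s in (m:ℝ)..x, g s with hPdef
  have hP : ∀ x : ℝ, HasDerivAt P (g x) x := fun x =>
    intervalIntegral.integral_hasDerivAt_right
      (hg.intervalIntegrable _ x)
      (hg.stronglyMeasurable.stronglyMeasurableAtFilter)
      hg.continuousAt
  have hPm : P m = 0 := by show (∫ s in (m:ℝ)..(m:ℝ), g s) = 0; simp
  have key : ∀ t ∈ Icc (m:ℝ) ((m:ℝ)+1), g t ≤ P t := by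
    intro t ht
    have ht1 : 1 ≤ t := le_trans hm1 ht.1
    have hsplit : (∫ s in (t-1)..t, g s) = (∫ s in (t-1)..(m:ℝ), g s) + P t :=
      (intervalIntegral.integral_add_adjacent_intervals (μ := MeasureTheory.volume)
        (hg.intervalIntegrable (t-1) (m:ℝ)) (hg.intervalIntegrable (m:ℝ) t)).symm
    have hfirst : (∫ s in (t-1)..(m:ℝ), g s) ≤ 0 := by
      have h1 : t - 1 ≤ (m:ℝ) := by linarith [ht.2]
      have h2 : 0 ≤ ∫ s in (t-1)..(m:ℝ), (-g) s := by
        apply intervalIntegral.integral_nonneg h1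
        intro u hu
        have : g u ≤ 0 := hyp u ⟨by linarith [hu.1, ht.1], hu.2⟩
        simpa using this
      have hneg : (∫ s in (t-1)..(m:ℝ), (-g) s) = -∫ s in (t-1)..(m:ℝ), g s :=
        intervalIntegral.integral_neg (μ := MeasureTheory.volume)
      rw [hneg] at h2
      linarith
    rw [hid t ht1, hsplit]
    linarith
  set Q : ℝ → ℝ := fun x => Real.exp (-x) * P x with hQdef
  have hQ : ∀ x : ℝ, HasDerivAt Q (Real.exp (-x) * (g x - P x)) x := by
    intro x
    have h1 : HasDerivAt (fun y : ℝ => Real.exp (-y)) (-Real.exp (-x)) x := by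
      have := ((hasDerivAt_id x).neg).exp
      simpa using this
    have := h1.fun_mul (hP x)
    refine this.congr_deriv ?_
    ring
  have hQanti : AntitoneOn Q (Icc (m:ℝ) ((m:ℝ)+1)) := by
    apply antitoneOn_of_deriv_nonpos (convex_Icc _ _)
    · exact (Continuous.continuousOn (by
        exact (Real.continuous_exp.comp continuous_neg).mul
          (continuous_iff_continuousAt.mpr fun x => (hP x).continuousAt)))
    · intro x hx
      exact ((hQ x).differentiableAt).differentiableWithinAt
    · intro x hx
      rw [interior_Icc] at hx
      rw [(hQ x).deriv]
      have hgP : g x - P x ≤ 0 := by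
        have := key x ⟨le_of_lt hx.1, le_of_lt hx.2⟩
        linarith
      exact mul_nonpos_of_nonneg_of_nonpos (Real.exp_nonneg _) hgP
  intro t ht
  have hQt : Q t ≤ Q m := hQanti ⟨le_refl _, by linarith⟩ ht ht.1
  have hQm : Q m = 0 := by rw [hQdef]; simp [hPm]
  have hPt : P t ≤ 0 := by
    have h1 : Real.exp (-t) * P t ≤ 0 := by rw [← hQm]; exact hQt
    nlinarith [Real.exp_pos (-t)]
  linarith [key t ht]

lemma line_int (c t : ℝ) :
    (∫ s in (t-1)..t, (c + 2*s/Real.exp 1)) = c + (2*t-1)/Real.exp 1 := by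
  have hderiv : ∀ s ∈ uIcc (t-1) t, HasDerivAt (fun s : ℝ => c*s + s^2/Real.exp 1)
      (c + 2*s/Real.exp 1) s := by
    intro s _
    have h1 : HasDerivAt (fun s : ℝ => c*s) c s := by
      simpa using (hasDerivAt_id s).const_mul c
    have h2 : HasDerivAt (fun s : ℝ => s^2/Real.exp 1) (2*s/Real.exp 1) s := by
      have := (hasDerivAt_pow 2 s).div_const (Real.exp 1)
      simpa [mul_comm] using this
    exact h1.add h2
  rw [intervalIntegral.integral_eq_sub_of_hasDerivAt hderiv
    (Continuous.intervalIntegrable (by continuity) _ _)]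
  have he : Real.exp 1 ≠ 0 := ne_of_gt (Real.exp_pos 1)
  field_simp
  ring

lemma g_id (c : ℝ) {t : ℝ} (ht : 1 ≤ t) :
    uG t - (c + 2*t/Real.exp 1) = ∫ s in (t-1)..t, (uG s - (c + 2*s/Real.exp 1)) := by
  have hsub : (∫ s in (t-1)..t, (uG s - (c + 2*s/Real.exp 1)))
      = (∫ s in (t-1)..t, uG s) - ∫ s in (t-1)..t, (c + 2*s/Real.exp 1) := by
    apply intervalIntegral.integral_sub (uG_cont.intervalIntegrable _ _)
      (Continuous.intervalIntegrable (by continuity) _ _)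
  rw [hsub, line_int]
  have := uG_int ht
  have he : Real.exp 1 ≠ 0 := ne_of_gt (Real.exp_pos 1)
  field_simp at this ⊢
  linarith

lemma base_bounds {t : ℝ} (h0 : 0 ≤ t) (h1 : t ≤ 1) :
    1/2 + 2*t/Real.exp 1 ≤ uG t ∧ uG t ≤ 5/4 + 2*t/Real.exp 1 := by
  have huG : uG t = (1 - t/Real.exp 1) * Real.exp t := by
    unfold uG
    rw [gamma_eq_on 0 t (by exact_mod_cast h0) (by norm_num; linarith), Fp0_eq, Real.exp_neg]
    field_simp
  have hE := Real.exp_one_gt_d9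
  have hE2 := Real.exp_one_lt_d9
  have hEpos : (0:ℝ) < Real.exp 1 := Real.exp_pos 1
  have hlb : 1 + t ≤ Real.exp t := by linarith [Real.add_one_le_exp t]
  have hub : Real.exp t ≤ 1 - t + t * Real.exp 1 := by
    have hc := convexOn_exp.2 (mem_univ (0:ℝ)) (mem_univ (1:ℝ)) (by linarith : (0:ℝ) ≤ 1 - t)
      h0 (by ring : (1-t) + t = 1)
    simpa [Real.exp_zero, smul_eq_mul] using hc
  have hsign : 0 ≤ 1 - t/Real.exp 1 := by
    rw [sub_nonneg, div_le_one hEpos]; linarith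
  constructor
  · -- lower
    rw [huG]
    have step : (1 - t/Real.exp 1) * (1+t) ≤ (1 - t/Real.exp 1) * Real.exp t :=
      mul_le_mul_of_nonneg_left hlb hsign
    have key2 : Real.exp 1/2 + 2*t ≤ (Real.exp 1 - t)*(1+t) := by
      nlinarith [mul_nonneg h0 (sub_nonneg.mpr h1), sq_nonneg t]
    have key : 1/2 + 2*t/Real.exp 1 ≤ (1 - t/Real.exp 1) * (1+t) := by
      rw [show (1 - t/Real.exp 1) * (1+t) = ((Real.exp 1 - t)*(1+t))/Real.exp 1 by
        field_simp]
      rw [show 1/2 + 2*t/Real.exp 1 = (Real.exp 1/2 + 2*t)/Real.exp 1 by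
        field_simp]
      exact div_le_div_of_nonneg_right key2 hEpos.le
    linarith
  · rw [huG]
    have step : (1 - t/Real.exp 1) * Real.exp t ≤ (1 - t/Real.exp 1) * (1 - t + t*Real.exp 1) :=
      mul_le_mul_of_nonneg_left hub hsign
    have key2 : (Real.exp 1 - t)*(1 - t + t*Real.exp 1) ≤ 5/4*Real.exp 1 + 2*t := by
      nlinarith [sq_nonneg (t - 1/2), mul_nonneg h0 (sub_nonneg.mpr h1), sq_nonneg t,
        mul_le_mul_of_nonneg_left h1 h0]
    have key : (1 - t/Real.exp 1) * (1 - t + t*Real.exp 1) ≤ 5/4 + 2*t/Real.exp 1 := by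
      rw [show (1 - t/Real.exp 1) * (1 - t + t*Real.exp 1)
          = ((Real.exp 1 - t)*(1 - t + t*Real.exp 1))/Real.exp 1 by field_simp]
      rw [show 5/4 + 2*t/Real.exp 1 = (5/4*Real.exp 1 + 2*t)/Real.exp 1 by field_simp]
      exact div_le_div_of_nonneg_right key2 hEpos.le
    linarith

lemma bounds_aux : ∀ n : ℕ, ∀ t : ℝ, 0 ≤ t → t ≤ (n:ℝ) + 1 →
    1/2 + 2*t/Real.exp 1 ≤ uG t ∧ uG t ≤ 5/4 + 2*t/Real.exp 1 := by
  intro n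
  induction n with
  | zero => intro t h0 h1; push_cast at h1; exact base_bounds h0 (by linarith)
  | succ n ih =>
    intro t h0 h1
    rcases le_or_gt t ((n:ℝ)+1) with h | h
    · exact ih t h0 h
    · have hm : 1 ≤ n + 1 := Nat.le_add_left 1 n
      constructor
      · -- lower: g := (1/2 + 2s/e) - uG ≤ 0
        have hcont1 : Continuous (fun s : ℝ => (1/2 + 2*s/Real.exp 1) - uG s) :=
          (continuous_const.add ((continuous_const.mul continuous_id).div_const _)).sub uG_cont
        have hprop := prop_nonpos (fun s => (1/2 + 2*s/Real.exp 1) - uG s)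
          hcont1 (n+1) hm
          (fun s hs => by
            show (1/2 + 2*s/Real.exp 1) - uG s
              = ∫ x in (s-1)..s, ((1/2 + 2*x/Real.exp 1) - uG x)
            have hg1 := g_id (1/2) hs
            have h2 : (∫ x in (s-1)..s, ((1/2 + 2*x/Real.exp 1) - uG x))
                = - ∫ x in (s-1)..s, (uG x - (1/2 + 2*x/Real.exp 1)) := by
              rw [← intervalIntegral.integral_neg (μ := MeasureTheory.volume)]
              congr 1
              funext x
              ring
            rw [h2, ← hg1]
            ring)
          (fun s hs => by
            have := (ih s hs.1 (by push_cast; push_cast at hs; linarith [hs.2])).1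
            linarith)
        have := hprop t ⟨by push_cast; linarith, by push_cast at h1 ⊢; linarith⟩
        linarith
      · have hcont2 : Continuous (fun s : ℝ => uG s - (5/4 + 2*s/Real.exp 1)) :=
          uG_cont.sub (continuous_const.add ((continuous_const.mul continuous_id).div_const _))
        have hprop := prop_nonpos (fun s => uG s - (5/4 + 2*s/Real.exp 1))
          hcont2 (n+1) hm
          (fun s hs => g_id (5/4) hs)
          (fun s hs => by
            have := (ih s hs.1 (by push_cast; push_cast at hs; linarith [hs.2])).2
            linarith)
        have := hprop t ⟨by push_cast; linarith, by push_cast at h1 ⊢; linarith⟩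
        linarith

lemma uG_bounds (t : ℝ) (h0 : 0 ≤ t) :
    1/2 + 2*t/Real.exp 1 ≤ uG t ∧ uG t ≤ 5/4 + 2*t/Real.exp 1 := by
  refine bounds_aux ⌈t⌉₊ t h0 ?_
  have := Nat.le_ceil t
  linarith

/-- Existence of the feasibility parameter `δ`: for `μ > ε·e > 0` there exists
`δ > 0` with `δ ∈ [μ²/(4ε) − μ, μ²/(4ε)]` solving
`Γ(2δ/μ) = (μ/(eε))·e^{−2δ/μ}`. -/
theorem exists_delta_root (μ ε : ℝ) (hε : 0 < ε) (hμ : ε * Real.exp 1 < μ) :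
    ∃ δ : ℝ, 0 < δ ∧ δ ∈ Set.Icc (μ ^ 2 / (4 * ε) - μ) (μ ^ 2 / (4 * ε)) ∧
      GammaDDE (2 * δ / μ) = (μ / (Real.exp 1 * ε)) * Real.exp (-(2 * δ / μ)) := by
  have hEpos : (0:ℝ) < Real.exp 1 := Real.exp_pos 1
  have hE := Real.exp_one_gt_d9
  have hE2 := Real.exp_one_lt_d9
  have hμpos : 0 < μ := lt_trans (by positivity) hμ
  set b : ℝ := μ / (2*ε) with hbdef
  set c : ℝ := μ / (Real.exp 1 * ε) with hcdef
  have hbpos : 0 < b := by positivity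
  have hcb : c = 2*b/Real.exp 1 := by rw [hcdef, hbdef]; field_simp
  have hbE : Real.exp 1 / 2 < b := by
    rw [hbdef, lt_div_iff₀ (by positivity)]
    nlinarith
  have hc1 : 1 < c := by
    rw [hcb, lt_div_iff₀ hEpos]
    linarith
  set K : ℝ → ℝ := fun z => uG z - c with hKdef
  set a₀ : ℝ := max (b - 2) 0 with ha₀def
  have ha₀0 : 0 ≤ a₀ := le_max_right _ _
  have ha₀b : a₀ ≤ b := max_le (by linarith) (le_of_lt hbpos)
  have hKcont : ContinuousOn K (Icc a₀ b) := (uG_cont.sub continuous_const).continuousOn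
  have hK0 : K 0 < 0 := by
    have huG0 : uG 0 = 1 := by
      unfold uG
      rw [Real.exp_zero, mul_one,
        gamma_eq_on 0 0 (by norm_num) (by norm_num), Fp0_eq]
      norm_num
    rw [hKdef]
    simp only [huG0]
    linarith
  have hKb : 0 < K b := by
    have := (uG_bounds b (le_of_lt hbpos)).1
    rw [hKdef]
    simp only
    rw [hcb]
    have h1 : 2*b/Real.exp 1 + 1/2 ≤ uG b := by
      have : (1:ℝ)/2 + 2*b/Real.exp 1 = 2*b/Real.exp 1 + 1/2 := by ring
      linarith
    linarith
  have hKa₀ : K a₀ < 0 := by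
    rcases le_or_gt b 2 with hb2 | hb2
    · have : a₀ = 0 := by rw [ha₀def, max_eq_right]; linarith
      rw [this]; exact hK0
    · have ha₀ : a₀ = b - 2 := by rw [ha₀def, max_eq_left]; linarith
      have hb20 : (0:ℝ) ≤ b - 2 := by linarith
      have := (uG_bounds (b-2) hb20).2
      rw [hKdef]
      simp only [ha₀]
      rw [hcb]
      have h4E : 5/4 - 4/Real.exp 1 < 0 := by
        rw [sub_neg, lt_div_iff₀ hEpos]
        nlinarith
      have heq : 5/4 + 2*(b-2)/Real.exp 1 - 2*b/Real.exp 1 = 5/4 - 4/Real.exp 1 := by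
        field_simp
        ring
      linarith [heq ▸ (by linarith [this] : uG (b-2) - 2*b/Real.exp 1 ≤ 5/4 + 2*(b-2)/Real.exp 1 - 2*b/Real.exp 1)]
  -- IVT
  obtain ⟨z₀, hz₀mem, hz₀⟩ := intermediate_value_Icc ha₀b hKcont
    (show (0:ℝ) ∈ Icc (K a₀) (K b) from ⟨le_of_lt hKa₀, le_of_lt hKb⟩)
  have hz₀0 : 0 ≤ z₀ := le_trans ha₀0 hz₀mem.1
  have hz₀pos : 0 < z₀ := by
    rcases eq_or_lt_of_le hz₀0 with h | h
    · exfalso; rw [← h] at hz₀; rw [hz₀] at hK0; exact lt_irrefl 0 hK0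
    · exact h
  refine ⟨μ * z₀ / 2, by positivity, ⟨?_, ?_⟩, ?_⟩
  · have h1 : b - 2 ≤ z₀ := le_trans (le_max_left _ _) hz₀mem.1
    have : μ^2/(4*ε) - μ = μ*(b-2)/2 := by rw [hbdef]; field_simp; ring
    rw [this]
    nlinarith
  · have h2 : z₀ ≤ b := hz₀mem.2
    have : μ^2/(4*ε) = μ*b/2 := by rw [hbdef]; field_simp; ring
    rw [this]
    nlinarith
  · have harg : 2 * (μ * z₀ / 2) / μ = z₀ := by field_simp
    rw [harg]
    have huz : uG z₀ = c := by
      have : K z₀ = 0 := hz₀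
      rw [hKdef] at this
      simp only at this
      linarith
    unfold uG at huz
    rw [Real.exp_neg]
    rw [hcdef] at huz ⊢
    have hexpz : Real.exp z₀ ≠ 0 := ne_of_gt (Real.exp_pos _)
    field_simp at huz ⊢
    linarith [huz]
end

section
/- Let x : [p*-δ-μ, p*+δ] → ℝ be a continuous solution of the delayed differential equation x'(v) = (x(v) − x(v−μ))/μ on [p*-δ, p*+δ] such that x is nondecreasing on the initial interval [p*-δ-μ, p*-δ]. Then x is nondecreasing on all of [p*-δ-μ, p*+δ]. -/
set_option maxHeartbeats 1000000


open Set

/-- Monotonicity of the perturbed delayed allocation: a continuous solution of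
the delayed differential equation `x'(v) = (x(v) − x(v−μ))/μ` on
`[p*−δ, p*+δ]` which is nondecreasing on the initial interval
`[p*−δ−μ, p*−δ]` is nondecreasing on all of `[p*−δ−μ, p*+δ]`. -/
theorem dde_solution_monotone
    (pstar δ μ : ℝ) (hμ : 0 < μ) (hδ : 0 < δ)
    (x : ℝ → ℝ)
    (hxcont : ContinuousOn x (Set.Icc (pstar - δ - μ) (pstar + δ)))
    (hdde : ∀ v ∈ Set.Icc (pstar - δ) (pstar + δ),
      HasDerivWithinAt x ((x v - x (v - μ)) / μ)
        (Set.Icc (pstar - δ) (pstar + δ)) v)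
    (hinit : MonotoneOn x (Set.Icc (pstar - δ - μ) (pstar - δ))) :
    MonotoneOn x (Set.Icc (pstar - δ - μ) (pstar + δ)) := by
  set a := pstar - δ with ha
  set b := pstar + δ with hb
  set L := pstar - δ - μ with hL
  have hab : a ≤ b := by rw [ha, hb]; linarith
  have hLa : L ≤ a := by rw [hL, ha]; linarith
  -- derivative at interior points
  have hderiv : ∀ v ∈ Ioo a b, HasDerivAt x ((x v - x (v - μ)) / μ) v := by
    intro v hv
    exact (hdde v (Ioo_subset_Icc_self hv)).hasDerivAt (Icc_mem_nhds hv.1 hv.2)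
  -- the key step: extend monotonicity by one delay interval
  have step : ∀ c ∈ Icc a b, MonotoneOn x (Icc L c) →
      MonotoneOn x (Icc L (min (c + μ) b)) := by
    intro c hc hmono
    set d := min (c + μ) b with hd
    have hcd : c ≤ d := le_min (by linarith) hc.2
    have hLc : L ≤ c := hLa.trans hc.1
    have hIoo : Ioo c d ⊆ Ioo a b := Ioo_subset_Ioo hc.1 (min_le_right _ _)
    have hsub : Icc c d ⊆ Icc L b := Icc_subset_Icc hLc (min_le_right _ _)
    have hxcont' : ContinuousOn x (Icc c d) := hxcont.mono hsub
    have hdelay : ∀ v ∈ Ioo c d, v - μ ∈ Icc L c := by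
      intro v hv
      have hv1 := hv.1
      have hv2 : v ≤ c + μ := hv.2.le.trans (min_le_left _ _)
      constructor
      · have : a ≤ v := hc.1.trans hv.1.le
        rw [hL, ha] at *
        linarith
      · linarith
    -- Claim A : x c ≤ x v on [c, d], via comparison with the exponential
    have hA : ∀ v ∈ Icc c d, x c ≤ x v := by
      set z : ℝ → ℝ := fun v => (x v - x c) * Real.exp (-(v / μ)) with hz
      have hzderiv : ∀ v ∈ Ioo c d,
          HasDerivAt z (((x v - x (v - μ)) / μ) * Real.exp (-(v / μ))
            + (x v - x c) * (Real.exp (-(v / μ)) * (-(1 / μ)))) v := by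
        intro v hv
        have h1 : HasDerivAt (fun v : ℝ => -(v / μ)) (-(1 / μ)) v := by
          simpa using ((hasDerivAt_id v).div_const μ).fun_neg
        exact ((hderiv v (hIoo hv)).sub_const (x c)).mul h1.exp
      have hzmono : MonotoneOn z (Icc c d) := by
        apply monotoneOn_of_deriv_nonneg (convex_Icc c d)
        · exact (hxcont'.sub continuousOn_const).mul
            ((Real.continuous_exp.comp ((continuous_id.div_const μ).neg)).continuousOn)
        · rw [interior_Icc]
          intro v hv
          exact (hzderiv v hv).differentiableAt.differentiableWithinAt
        · rw [interior_Icc]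
          intro v hv
          rw [(hzderiv v hv).deriv]
          have hxle : x (v - μ) ≤ x c :=
            hmono (hdelay v hv) ⟨hLc, le_refl c⟩ (hdelay v hv).2
          have hkey : ((x v - x (v - μ)) / μ) * Real.exp (-(v / μ))
              + (x v - x c) * (Real.exp (-(v / μ)) * (-(1 / μ)))
              = Real.exp (-(v / μ)) * ((x c - x (v - μ)) / μ) := by
            field_simp
            ring
          rw [hkey]
          exact mul_nonneg (Real.exp_pos _).le
            (div_nonneg (by linarith) hμ.le)
      intro v hv
      have h0 : z c ≤ z v := hzmono ⟨le_refl c, hcd⟩ hv hv.1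
      have hzc : z c = 0 := by simp [hz]
      rw [hzc, hz] at h0
      nlinarith [Real.exp_pos (-(v / μ))]
    -- monotone on [c, d]
    have hB : MonotoneOn x (Icc c d) := by
      apply monotoneOn_of_deriv_nonneg (convex_Icc c d) hxcont'
      · rw [interior_Icc]
        intro v hv
        exact (hderiv v (hIoo hv)).differentiableAt.differentiableWithinAt
      · rw [interior_Icc]
        intro v hv
        rw [(hderiv v (hIoo hv)).deriv]
        have h1 : x (v - μ) ≤ x c :=
          hmono (hdelay v hv) ⟨hLc, le_refl c⟩ (hdelay v hv).2
        have h2 : x c ≤ x v := hA v ⟨hv.1.le, hv.2.le⟩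
        exact div_nonneg (by linarith) hμ.le
    -- glue
    have := hmono.union_right hB ⟨⟨hLc, le_refl c⟩, fun y hy => hy.2⟩
      ⟨⟨le_refl c, hcd⟩, fun y hy => hy.1⟩
    rwa [Icc_union_Icc_eq_Icc hLc hcd] at this
  -- induction over intervals of length μ
  have main : ∀ n : ℕ, MonotoneOn x (Icc L (min (a + n * μ) b)) := by
    intro n
    induction n with
    | zero => simpa [min_eq_left hab] using hinit
    | succ n ih =>
      have hcmem : min (a + n * μ) b ∈ Icc a b :=
        ⟨le_min (by nlinarith [Nat.cast_nonneg (α := ℝ) n]) hab, min_le_right _ _⟩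
      have h := step _ hcmem ih
      refine h.mono (Icc_subset_Icc_right ?_)
      rcases le_total (a + n * μ) b with hle | hle
      · rw [min_eq_left hle]
        have : a + (n + 1 : ℕ) * μ = a + n * μ + μ := by push_cast; ring
        rw [this]
      · rw [min_eq_right hle]
        exact (min_le_right _ _).trans (le_min (by linarith) le_rfl)
  obtain ⟨n, hn⟩ := exists_nat_ge ((b - a) / μ)
  have hnb : b ≤ a + n * μ := by
    rw [div_le_iff₀ hμ] at hn
    linarith
  have := main n
  rwa [min_eq_right hnb] at this
end

section
/- Suppose R : (0, v̄) → ℝ is differentiable, locally concave around an interior maximizer p*, and satisfies κ̃_L·|v−p*|^α ≤ R(p*) − R(v) ≤ κ̃_U·|v−p*|^α for all v in a neighborhood of p*, where α > 1 and κ̃_L, κ̃_U > 0. Then there exist constants κ_L, κ_U > 0 and a (possibly smaller) neighborhood of p* on which κ_L·α·|v−p*|^α ≤ (p*−v)·R'(v) ≤ κ_U·α·|v−p*|^α; in particular one may take κ_U = e·κ̃_U (up to the factor α) on that neighborhood. Conversely, the derivative condition implies the value condition with constants κ_L, κ_U by integration. -/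
open Set Real

/-- Supporting line inequality for a concave differentiable function. -/
lemma concave_support_line {S : Set ℝ} {R : ℝ → ℝ} (hconc : ConcaveOn ℝ S R)
    {v z : ℝ} (hv : v ∈ S) (hz : z ∈ S) (hd : DifferentiableAt ℝ R v) :
    R z ≤ R v + deriv R v * (z - v) := by
  rcases lt_trichotomy v z with h | h | h
  · have hs := hconc.slope_le_deriv hv hz h hd
    rw [slope_def_field] at hs
    have hzv : (0:ℝ) < z - v := by linarith
    rw [div_le_iff₀ hzv] at hs
    linarith
  · subst h; simp
  · have hs := hconc.deriv_le_slope hz hv h hd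
    rw [slope_def_field] at hs
    have hvz : (0:ℝ) < v - z := by linarith
    rw [le_div_iff₀ hvz] at hs
    have : deriv R v * (z - v) = -(deriv R v * (v - z)) := by ring
    linarith

/-- Equivalence of the value and derivative forms of the local α-power envelope
condition for a locally concave revenue function around an interior maximizer:
the bounds `κ̃_L·|v−p*|^α ≤ R(p*) − R(v) ≤ κ̃_U·|v−p*|^α` hold on a neighborhood
of `p*` iff the bounds `κ_L·α·|v−p*|^α ≤ (p*−v)·R'(v) ≤ κ_U·α·|v−p*|^α` hold on
a (possibly smaller) neighborhood. -/
theorem alpha_power_envelope_equivalence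
    (vbar pstar α : ℝ) (hα : 1 < α)
    (hp : 0 < pstar) (hpv : pstar < vbar)
    (R : ℝ → ℝ)
    (hdiff : ∀ v ∈ Set.Ioo (0:ℝ) vbar, DifferentiableAt ℝ R v)
    (hmax : ∀ v ∈ Set.Ioo (0:ℝ) vbar, R v ≤ R pstar)
    (ℓc : ℝ) (hℓc : 0 < ℓc)
    (hsub : Set.Icc (pstar - ℓc) (pstar + ℓc) ⊆ Set.Ioo (0:ℝ) vbar)
    (hconc : ConcaveOn ℝ (Set.Icc (pstar - ℓc) (pstar + ℓc)) R) :
    ((∃ κL κU ℓ : ℝ, 0 < κL ∧ 0 < κU ∧ 0 < ℓ ∧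
        Set.Ioo (pstar - ℓ) (pstar + ℓ) ⊆ Set.Ioo (0:ℝ) vbar ∧
        ∀ v ∈ Set.Ioo (pstar - ℓ) (pstar + ℓ),
          κL * |v - pstar| ^ α ≤ R pstar - R v ∧
          R pstar - R v ≤ κU * |v - pstar| ^ α) →
      (∃ κL κU ℓ : ℝ, 0 < κL ∧ 0 < κU ∧ 0 < ℓ ∧
        Set.Ioo (pstar - ℓ) (pstar + ℓ) ⊆ Set.Ioo (0:ℝ) vbar ∧
        ∀ v ∈ Set.Ioo (pstar - ℓ) (pstar + ℓ),
          κL * α * |v - pstar| ^ α ≤ (pstar - v) * deriv R v ∧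
          (pstar - v) * deriv R v ≤ κU * α * |v - pstar| ^ α)) ∧
    ((∃ κL κU ℓ : ℝ, 0 < κL ∧ 0 < κU ∧ 0 < ℓ ∧
        Set.Ioo (pstar - ℓ) (pstar + ℓ) ⊆ Set.Ioo (0:ℝ) vbar ∧
        ∀ v ∈ Set.Ioo (pstar - ℓ) (pstar + ℓ),
          κL * α * |v - pstar| ^ α ≤ (pstar - v) * deriv R v ∧
          (pstar - v) * deriv R v ≤ κU * α * |v - pstar| ^ α) →
      (∃ κL κU ℓ : ℝ, 0 < κL ∧ 0 < κU ∧ 0 < ℓ ∧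
        Set.Ioo (pstar - ℓ) (pstar + ℓ) ⊆ Set.Ioo (0:ℝ) vbar ∧
        ∀ v ∈ Set.Ioo (pstar - ℓ) (pstar + ℓ),
          κL * |v - pstar| ^ α ≤ R pstar - R v ∧
          R pstar - R v ≤ κU * |v - pstar| ^ α)) := by
  have hα0 : (0:ℝ) < α := by linarith
  have hαne : α ≠ 0 := ne_of_gt hα0
  have h2α : (0:ℝ) < (2:ℝ) ^ α := Real.rpow_pos_of_pos (by norm_num) α
  have hpIcc : pstar ∈ Set.Icc (pstar - ℓc) (pstar + ℓc) := ⟨by linarith, by linarith⟩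
  constructor
  · -- value ⇒ derivative
    rintro ⟨κL, κU, ℓ, hκL, hκU, hℓ, hsub', hbd⟩
    have hm1 := min_le_left ℓ ℓc
    have hm2 := min_le_right ℓ ℓc
    have hmpos : 0 < min ℓ ℓc := lt_min hℓ hℓc
    refine ⟨κL / α, κU * 2 ^ α / α, min ℓ ℓc / 2,
      div_pos hκL hα0, div_pos (mul_pos hκU h2α) hα0, by positivity, ?_, ?_⟩
    · intro x hx
      exact hsub ⟨by linarith [hx.1], by linarith [hx.2]⟩
    · intro v hv
      obtain ⟨hv1, hv2⟩ := hv
      have hvℓ : v ∈ Set.Ioo (pstar - ℓ) (pstar + ℓ) := ⟨by linarith, by linarith⟩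
      have hvIcc : v ∈ Set.Icc (pstar - ℓc) (pstar + ℓc) := ⟨by linarith, by linarith⟩
      have hvd : DifferentiableAt ℝ R v := hdiff v (hsub hvIcc)
      have hzℓ : 2 * v - pstar ∈ Set.Ioo (pstar - ℓ) (pstar + ℓ) :=
        ⟨by linarith, by linarith⟩
      have hzIcc : 2 * v - pstar ∈ Set.Icc (pstar - ℓc) (pstar + ℓc) :=
        ⟨by linarith, by linarith⟩
      obtain ⟨hbL, hbU⟩ := hbd v hvℓ
      obtain ⟨hbLz, hbUz⟩ := hbd _ hzℓ
      -- supporting line at v through pstar : lower bound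
      have hline1 := concave_support_line hconc hvIcc hpIcc hvd
      have hline2 := concave_support_line hconc hvIcc hzIcc hvd
      have habs : |2 * v - pstar - pstar| ^ α = 2 ^ α * |v - pstar| ^ α := by
        have : |2 * v - pstar - pstar| = 2 * |v - pstar| := by
          rw [show 2 * v - pstar - pstar = 2 * (v - pstar) by ring, abs_mul]
          norm_num
        rw [this, Real.mul_rpow (by norm_num) (abs_nonneg _)]
      have hLnonneg : 0 ≤ κL * |v - pstar| ^ α :=
        mul_nonneg hκL.le (Real.rpow_nonneg (abs_nonneg _) _)
      constructor
      · have : κL / α * α = κL := by field_simp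
        rw [this]
        nlinarith [hline1, hbL]
      · have heq : κU * 2 ^ α / α * α * |v - pstar| ^ α
            = κU * (2 ^ α * |v - pstar| ^ α) := by field_simp
        rw [heq, ← habs]
        -- hline2 : R (2v-p) ≤ R v + R'(v) * (2v - p - v), and 2v-p-v = v-p
        have h3 : (pstar - v) * deriv R v ≤ R v - R (2 * v - pstar) := by
          have : deriv R v * (2 * v - pstar - v) = -((pstar - v) * deriv R v) := by ring
          linarith [hline2, this.le, this.ge]
        linarith [hbUz, hbL, hLnonneg]
  · -- derivative ⇒ value
    rintro ⟨κL, κU, ℓ, hκL, hκU, hℓ, hsub', hbd⟩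
    have hm1 := min_le_left ℓ ℓc
    have hm2 := min_le_right ℓ ℓc
    have hmpos : 0 < min ℓ ℓc := lt_min hℓ hℓc
    refine ⟨κL * α / 2 ^ α, κU * α, min ℓ ℓc,
      by positivity, by positivity, hmpos, ?_, ?_⟩
    · intro x hx
      exact hsub ⟨by linarith [hx.1], by linarith [hx.2]⟩
    · intro v hv
      obtain ⟨hv1, hv2⟩ := hv
      have hvℓ : v ∈ Set.Ioo (pstar - ℓ) (pstar + ℓ) := ⟨by linarith, by linarith⟩
      have hvIcc : v ∈ Set.Icc (pstar - ℓc) (pstar + ℓc) := ⟨by linarith, by linarith⟩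
      have hvd : DifferentiableAt ℝ R v := hdiff v (hsub hvIcc)
      obtain ⟨hbL, hbU⟩ := hbd v hvℓ
      -- midpoint
      set m := (v + pstar) / 2 with hm
      have hmℓ : m ∈ Set.Ioo (pstar - ℓ) (pstar + ℓ) :=
        ⟨by simp only [hm]; linarith, by simp only [hm]; linarith⟩
      have hmIcc : m ∈ Set.Icc (pstar - ℓc) (pstar + ℓc) :=
        ⟨by simp only [hm]; linarith, by simp only [hm]; linarith⟩
      have hmd : DifferentiableAt ℝ R m := hdiff m (hsub hmIcc)
      obtain ⟨hbLm, _⟩ := hbd m hmℓ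
      have habs : |m - pstar| ^ α = |v - pstar| ^ α / 2 ^ α := by
        have h1 : |m - pstar| = |v - pstar| / 2 := by
          rw [show m - pstar = (v - pstar) / 2 by rw [hm]; ring, abs_div]
          norm_num
        rw [h1, Real.div_rpow (abs_nonneg _) (by norm_num)]
      constructor
      · -- lower bound: R(m) - R(v) ≥ (p-m) R'(m) ≥ κL α |m-p|^α, and R(p) ≥ R(m)
        have hline := concave_support_line hconc hmIcc hvIcc hmd
        have h1 : (pstar - m) * deriv R m ≤ R m - R v := by
          have : deriv R m * (v - m) = -((pstar - m) * deriv R m) := by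
            rw [hm]; ring
          linarith [hline, this.le, this.ge]
        have h2 : R m ≤ R pstar := hmax m (hsub hmIcc)
        have h3 : κL * α * |m - pstar| ^ α ≤ R m - R v := le_trans hbLm h1
        rw [habs] at h3
        have heq : κL * α / 2 ^ α * |v - pstar| ^ α
            = κL * α * (|v - pstar| ^ α / 2 ^ α) := by ring
        rw [heq]
        linarith
      · -- upper bound: supporting line at v through pstar
        have hline := concave_support_line hconc hvIcc hpIcc hvd
        have : deriv R v * (pstar - v) = (pstar - v) * deriv R v := by ring
        have heq : κU * α * |v - pstar| ^ α = κU * α * |v - pstar| ^ α := rfl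
        nlinarith [hline, hbU]
end

section
/- Let F be a CDF with density f on [0, v̄], and let (x, t) be the perturbed delayed mechanism with parameters (μ, δ): x solves the ODE/DDE system with x(v) = 1 for v > p*+δ, v*(v) is the piecewise best-response map (0 below p*−δ, v−μ on [p*−δ, p*+δ+μ], p*+δ above), and t(v) = v·x(v) for v < p*−δ, t(v) = v·x(v) − ∫_0^v x(v*(s))ds + ε for v ≥ p*−δ. Then the expected revenue equals ∫_0^{p*+δ} x(v)·(v − (1−F(v+μ))·w'(v)/f(v))·f(v) dv + R(p*+δ) + ∫_{p*+δ}^{p*+δ+μ} (1−F(v)) dv, where w is the generalized inverse of v* (w(v) = p*−δ for v ≤ p*−δ−μ and w(v) = v+μ otherwise) and R(v) = v(1−F(v)). -/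
open Set MeasureTheory intervalIntegral Topology Filter

private lemma ae_ne_point (c : ℝ) : ∀ᵐ s : ℝ ∂volume, s ≠ c := by
  have h : (volume : Measure ℝ) {c} = 0 := Real.volume_singleton
  filter_upwards [compl_mem_ae_iff.2 h] with s hs
  simpa using hs

private lemma II_congr {f g : ℝ → ℝ} {a b : ℝ}
    (hg : IntervalIntegrable g volume a b)
    (h : ∀ᵐ s ∂(volume : Measure ℝ), s ∈ Set.uIoc a b → f s = g s) :
    IntervalIntegrable f volume a b := by
  rw [intervalIntegrable_iff] at hg ⊢
  exact hg.congr ((ae_restrict_iff' measurableSet_uIoc).2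
    (h.mono fun s hs hmem => (hs hmem).symm))

set_option maxHeartbeats 1000000

/-- Revenue of the perturbed delayed mechanism: with the piecewise best-response
map `v*`, its generalized inverse `w`, the allocation `x` solving the ODE/DDE
system (with `x ≡ 1` above `p*+δ`) and the associated transfers `t`, the
expected revenue equals
`∫₀^{p*+δ} x(v)·(v − (1−F(v+μ))·w'(v)/f(v))·f(v) dv + R(p*+δ)
 + ∫_{p*+δ}^{p*+δ+μ} (1−F(v)) dv`, where `R(v) = v(1−F(v))`. -/
theorem perturbed_delayed_mechanism_revenue
    (vbar pstar δ μ ε : ℝ)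
    (hμ : 0 < μ) (hδ : 0 < δ) (hε : 0 < ε)
    (hlow : 0 < pstar - δ - μ) (hhigh : pstar + δ + μ < vbar)
    (F f x t vstar w : ℝ → ℝ)
    (hf : ∀ v, HasDerivAt F (f v) v)
    (hfcont : Continuous f)
    (hfpos : ∀ v ∈ Set.Icc (0:ℝ) vbar, 0 < f v)
    (hFvbar : F vbar = 1)
    (hvstar : ∀ v, vstar v =
      if v < pstar - δ then 0
      else if v ≤ pstar + δ + μ then v - μ else pstar + δ)
    (hw : ∀ v, w v = if v ≤ pstar - δ - μ then pstar - δ else v + μ)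
    (hxcont : ContinuousOn x (Set.Icc 0 vbar))
    (hODE : ∀ v ∈ Set.Ioo (0:ℝ) (pstar - δ),
      HasDerivAt x (x v / (w v - v)) v)
    (hDDE : ∀ v ∈ Set.Ioo (pstar - δ) (pstar + δ),
      HasDerivAt x ((x v - x (vstar v)) / (w v - v)) v)
    (hx0 : x 0 = ε / (pstar - δ))
    (hx1 : ∀ v, pstar + δ < v → x v = 1)
    (ht1 : ∀ v, 0 ≤ v → v < pstar - δ → t v = v * x v)
    (ht2 : ∀ v, pstar - δ ≤ v →
      t v = v * x v - (∫ s in (0:ℝ)..v, x (vstar s)) + ε) :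
    ∫ v in (0:ℝ)..vbar, t v * f v =
      (∫ v in (0:ℝ)..(pstar + δ),
        x v * (v - (1 - F (v + μ)) * deriv w v / f v) * f v)
      + (pstar + δ) * (1 - F (pstar + δ))
      + ∫ v in (pstar + δ)..(pstar + δ + μ), (1 - F v) := by
  set A := pstar - δ with hA
  set B := pstar + δ with hB
  set C := B + μ with hC
  set m := A - μ with hmdef
  have hm0 : 0 < m := hlow
  have hmA : m < A := by rw [hmdef]; linarith
  have h0A : 0 < A := by linarith
  have hAB : A < B := by rw [hA, hB]; linarith
  have hBC : B < C := by rw [hC]; linarith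
  have hCv : C < vbar := hhigh
  have hBv : B < vbar := by linarith
  have h0v : (0:ℝ) < vbar := by linarith
  have hmB : m < B := by linarith
  have h0m : (0:ℝ) ≤ m := hm0.le
  have hAC : A ≤ C := by linarith
  -- continuity of F
  have hFc : Continuous F := (Differentiable.continuous fun v => (hf v).differentiableAt)
  -- continuous extension of x
  set y : ℝ → ℝ := fun v => x (max 0 (min v vbar)) with hydef
  have hyc : Continuous y := by
    apply hxcont.comp_continuous
    · exact continuous_const.max (continuous_id.min continuous_const)
    · intro v
      exact ⟨le_max_left _ _, max_le h0v.le (min_le_right _ _)⟩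
  have hyx : ∀ v ∈ Icc (0:ℝ) vbar, y v = x v := by
    intro v hv
    simp only [hydef]
    rw [min_eq_left hv.2, max_eq_right hv.1]
  -- x B = 1
  have hxB : x B = 1 := by
    have hne : (𝓝[Ioc B vbar] B).NeBot := left_nhdsWithin_Ioc_neBot hBv
    have h1 : Filter.Tendsto x (𝓝[Ioc B vbar] B) (𝓝 (x B)) :=
      (hxcont B ⟨by linarith, hBv.le⟩).mono fun u hu => ⟨by linarith [hu.1], hu.2⟩
    have h2 : Filter.Tendsto x (𝓝[Ioc B vbar] B) (𝓝 1) := by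
      apply Filter.Tendsto.congr' _ tendsto_const_nhds
      filter_upwards [self_mem_nhdsWithin] with u hu
      exact (hx1 u hu.1).symm
    exact tendsto_nhds_unique h1 h2
  have hy1 : ∀ v ∈ Icc B vbar, y v = 1 := by
    intro v hv
    rw [hyx v ⟨by linarith [hv.1], hv.2⟩]
    rcases eq_or_lt_of_le hv.1 with h | h
    · rw [← h]; exact hxB
    · exact hx1 v h
  -- FTC for f
  have hFint : ∀ a b : ℝ, ∫ v in a..b, f v = F b - F a := fun a b =>
    integral_eq_sub_of_hasDerivAt (fun v _ => hf v) (hfcont.intervalIntegrable a b)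
  -- shifted y
  have hysc : Continuous fun s : ℝ => y (s - μ) := hyc.comp (continuous_id.sub continuous_const)
  have contvyf : Continuous fun v : ℝ => v * y v * f v := (continuous_id.mul hyc).mul hfcont
  -- G1
  set G1 : ℝ → ℝ := fun v => ε + ∫ s in A..v, y (s - μ) with hG1def
  have hG1' : ∀ v, HasDerivAt G1 (y (v - μ)) v := by
    intro v
    simpa [hG1def] using ((hysc.integral_hasStrictDerivAt A v).hasDerivAt.const_add ε)
  have hG1c : Continuous G1 := Differentiable.continuous fun v => (hG1' v).differentiableAt
  have hG1A : G1 A = ε := by simp [hG1def]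
  -- the function s ↦ x (vstar s)
  have hEqAC : EqOn (fun s => x (vstar s)) (fun s => y (s - μ)) (uIcc A C) := by
    intro s hs
    rw [uIcc_of_le hAC] at hs
    beta_reduce
    rw [hvstar s, if_neg (not_lt.2 hs.1), if_pos hs.2,
      ← hyx (s - μ) ⟨by linarith [hs.1], by rw [hC] at hs; linarith [hs.2]⟩]
  have hxsi1 : IntervalIntegrable (fun s => x (vstar s)) volume 0 A := by
    apply II_congr (intervalIntegrable_const (c := ε / A))
    filter_upwards [ae_ne_point A] with s hs hmem
    rw [uIoc_of_le h0A.le] at hmem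
    beta_reduce
    rw [hvstar s, if_pos (lt_of_le_of_ne hmem.2 hs), hx0]
  have hxsi2 : IntervalIntegrable (fun s => x (vstar s)) volume A C :=
    II_congr (hysc.intervalIntegrable A C)
      (Filter.Eventually.of_forall fun s hs => hEqAC (uIoc_subset_uIcc hs))
  have hGa : (∫ s in (0:ℝ)..A, x (vstar s)) = ε := by
    have h1 : (∫ s in (0:ℝ)..A, x (vstar s)) = ∫ _ in (0:ℝ)..A, (ε / A) := by
      apply intervalIntegral.integral_congr_ae
      filter_upwards [ae_ne_point A] with s hs hmem
      rw [uIoc_of_le h0A.le] at hmem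
      rw [hvstar s, if_pos (lt_of_le_of_ne hmem.2 hs), hx0]
    rw [h1, intervalIntegral.integral_const, smul_eq_mul, sub_zero]
    field_simp
  have hGv : ∀ v ∈ Icc A C, (∫ s in (0:ℝ)..v, x (vstar s)) = G1 v := by
    intro v hv
    have hsub : uIcc A v ⊆ uIcc A C :=
      uIcc_subset_uIcc left_mem_uIcc (by rw [uIcc_of_le hAC]; exact hv)
    have hEq : EqOn (fun s => x (vstar s)) (fun s => y (s - μ)) (uIcc A v) :=
      fun s hs => hEqAC (hsub hs)
    have h2 : IntervalIntegrable (fun s => x (vstar s)) volume A v :=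
      hxsi2.mono_set hsub
    calc (∫ s in (0:ℝ)..v, x (vstar s))
        = (∫ s in (0:ℝ)..A, x (vstar s)) + ∫ s in A..v, x (vstar s) :=
          (integral_add_adjacent_intervals hxsi1 h2).symm
      _ = ε + ∫ s in A..v, y (s - μ) := by rw [hGa, intervalIntegral.integral_congr hEq]
      _ = G1 v := by simp only [hG1def]
  -- xstar ≡ 1 on [C, ∞)
  have hxs1 : ∀ s, C ≤ s → x (vstar s) = 1 := by
    intro s hs
    rw [hvstar s, if_neg (not_lt.2 (by linarith : A ≤ s))]
    rcases eq_or_lt_of_le hs with h | h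
    · rw [if_pos (le_of_eq h.symm), ← h, show C - μ = B from by rw [hC]; ring, hxB]
    · rw [if_neg (not_le.2 h), hxB]
  -- t on [C, vbar]
  have htC : ∀ v ∈ Icc C vbar, t v = C + ε - G1 C := by
    intro v hv
    have hxv : x v = 1 := hx1 v (by linarith [hv.1])
    have h2 : EqOn (fun s => x (vstar s)) (fun _ => (1:ℝ)) (uIcc C v) := by
      intro s hs
      rw [uIcc_of_le hv.1] at hs
      exact hxs1 s hs.1
    have hi2 : IntervalIntegrable (fun s => x (vstar s)) volume C v :=
      II_congr (intervalIntegrable_const (c := (1:ℝ)))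
        (Filter.Eventually.of_forall fun s hs => h2 (uIoc_subset_uIcc hs))
    have hsplit : (∫ s in (0:ℝ)..v, x (vstar s)) = G1 C + (v - C) := by
      calc (∫ s in (0:ℝ)..v, x (vstar s))
          = (∫ s in (0:ℝ)..C, x (vstar s)) + ∫ s in C..v, x (vstar s) :=
            (integral_add_adjacent_intervals (hxsi1.trans hxsi2) hi2).symm
        _ = G1 C + (v - C) := by
            rw [hGv C ⟨hAC, le_refl C⟩, intervalIntegral.integral_congr h2, intervalIntegral.integral_const, smul_eq_mul, mul_one]
    rw [ht2 v (by linarith [hv.1] : A ≤ v), hxv, hsplit]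
    ring
  -- piece 3
  have hP3 : (∫ v in C..vbar, t v * f v) = (C + ε - G1 C) * (1 - F C) := by
    have hEq : EqOn (fun v => t v * f v) (fun v => (C + ε - G1 C) * f v) (uIcc C vbar) := by
      intro v hv
      rw [uIcc_of_le hCv.le] at hv
      beta_reduce
      rw [htC v hv]
    rw [intervalIntegral.integral_congr hEq, intervalIntegral.integral_const_mul, hFint, hFvbar]
  -- piece 1
  have haeP1 : ∀ᵐ s ∂(volume : Measure ℝ), s ∈ Set.uIoc (0:ℝ) A →
      t s * f s = s * y s * f s := by
    filter_upwards [ae_ne_point A] with s hs hmem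
    rw [uIoc_of_le h0A.le] at hmem
    have h1 : s < A := lt_of_le_of_ne hmem.2 hs
    rw [ht1 s hmem.1.le h1, hyx s ⟨hmem.1.le, by linarith⟩]
  have hP1 : (∫ v in (0:ℝ)..A, t v * f v) = ∫ v in (0:ℝ)..A, v * y v * f v :=
    intervalIntegral.integral_congr_ae haeP1
  -- piece 2
  have hP2eq : EqOn (fun v => t v * f v) (fun v => (v * y v - G1 v + ε) * f v) (uIcc A C) := by
    intro v hv
    rw [uIcc_of_le hAC] at hv
    beta_reduce
    rw [ht2 v hv.1, hGv v hv, hyx v ⟨by linarith [hv.1], by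
      rw [hC] at hv; linarith [hv.2]⟩]
  have contP2 : Continuous fun v : ℝ => (v * y v - G1 v + ε) * f v :=
    (((continuous_id.mul hyc).sub hG1c).add continuous_const).mul hfcont
  have hP2 : (∫ v in A..C, t v * f v) =
      (∫ v in A..C, v * y v * f v) + ε * (F C - F A) - ∫ v in A..C, G1 v * f v := by
    rw [intervalIntegral.integral_congr hP2eq]
    have h1 : (∫ v in A..C, (v * y v - G1 v + ε) * f v)
        = ∫ v in A..C, (v * y v * f v + ε * f v - G1 v * f v) :=
      intervalIntegral.integral_congr fun v _ => by ring
    rw [h1, intervalIntegral.integral_sub ((contvyf.intervalIntegrable A C).add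
        (show IntervalIntegrable (fun v => ε * f v) volume A C from (continuous_const.mul hfcont).intervalIntegrable A C))
        (show IntervalIntegrable (fun v => G1 v * f v) volume A C from (hG1c.mul hfcont).intervalIntegrable A C),
      intervalIntegral.integral_add (contvyf.intervalIntegrable A C)
        (show IntervalIntegrable (fun v => ε * f v) volume A C from (continuous_const.mul hfcont).intervalIntegrable A C),
      intervalIntegral.integral_const_mul, hFint]
  -- integration by parts on [A, C]
  have hbp1 : (∫ v in A..C, (y (v - μ) * (F v - 1) + G1 v * f v))
      = G1 C * (F C - 1) - ε * (F A - 1) := by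
    have h := integral_eq_sub_of_hasDerivAt
      (f := fun v => G1 v * (F v - 1))
      (f' := fun v => y (v - μ) * (F v - 1) + G1 v * f v) (a := A) (b := C)
      (fun v _ => (hG1' v).mul ((hf v).sub_const 1))
      (((hysc.mul (hFc.sub continuous_const)).add (hG1c.mul hfcont)).intervalIntegrable A C)
    beta_reduce at h
    rw [hG1A] at h
    exact h
  have hbpadd : (∫ v in A..C, (y (v - μ) * (F v - 1) + G1 v * f v))
      = (∫ v in A..C, y (v - μ) * (F v - 1)) + ∫ v in A..C, G1 v * f v :=
    intervalIntegral.integral_add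
      ((hysc.mul (hFc.sub continuous_const)).intervalIntegrable A C)
      ((hG1c.mul hfcont).intervalIntegrable A C)
  have hnegS : (∫ v in A..C, y (v - μ) * (F v - 1))
      = - ∫ v in A..C, y (v - μ) * (1 - F v) := by
    rw [← intervalIntegral.integral_neg]
    exact intervalIntegral.integral_congr fun v _ => by ring
  -- integration by parts on [B, C]
  have hbp2 : (∫ v in B..C, ((F v - 1) + v * f v)) = C * (F C - 1) - B * (F B - 1) := by
    have h := integral_eq_sub_of_hasDerivAt (f := fun v => v * (F v - 1))
      (f' := fun v => (F v - 1) + v * f v) (a := B) (b := C)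
      (fun v _ => ((hasDerivAt_id' v).mul ((hf v).sub_const 1)).congr_deriv (by ring))
      (((hFc.sub continuous_const).add (continuous_id.mul hfcont)).intervalIntegrable B C)
    beta_reduce at h
    exact h
  have hbp2add : (∫ v in B..C, ((F v - 1) + v * f v))
      = (∫ v in B..C, (F v - 1)) + ∫ v in B..C, v * f v :=
    intervalIntegral.integral_add
      ((hFc.sub continuous_const).intervalIntegrable B C)
      ((continuous_id.mul hfcont).intervalIntegrable B C)
  have hBC1 : (∫ v in B..C, (F v - 1)) = - ∫ v in B..C, (1 - F v) := by
    rw [← intervalIntegral.integral_neg]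
    exact intervalIntegral.integral_congr fun v _ => by ring
  -- derivative of w
  have hw0 : ∀ v, v < m → deriv w v = 0 := by
    intro v hv
    have hev : w =ᶠ[nhds v] fun _ => A := by
      filter_upwards [Iio_mem_nhds hv] with u hu
      rw [hw u, if_pos (le_of_lt hu)]
    rw [hev.deriv_eq]
    exact deriv_const v A
  have hw1 : ∀ v, m < v → deriv w v = 1 := by
    intro v hv
    have hev : w =ᶠ[nhds v] fun u => u + μ := by
      filter_upwards [Ioi_mem_nhds hv] with u hu
      rw [hw u, if_neg (not_le.2 hu)]
    rw [hev.deriv_eq]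
    simpa using ((hasDerivAt_id v).add_const μ).deriv
  -- RHS integrand pieces
  have haeI1 : ∀ᵐ s ∂(volume : Measure ℝ), s ∈ Set.uIoc (0:ℝ) m →
      x s * (s - (1 - F (s + μ)) * deriv w s / f s) * f s = s * y s * f s := by
    filter_upwards [ae_ne_point m] with s hs hmem
    rw [uIoc_of_le h0m] at hmem
    have h1 : s < m := lt_of_le_of_ne hmem.2 hs
    rw [hw0 s h1, ← hyx s ⟨hmem.1.le, by linarith⟩]
    ring
  have haeI2 : ∀ᵐ s ∂(volume : Measure ℝ), s ∈ Set.uIoc m B →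
      x s * (s - (1 - F (s + μ)) * deriv w s / f s) * f s
        = s * y s * f s - y s * (1 - F (s + μ)) := by
    apply Filter.Eventually.of_forall
    intro s hmem
    rw [uIoc_of_le hmB.le] at hmem
    have hfs : f s ≠ 0 :=
      (hfpos s ⟨by linarith [hmem.1], by linarith [hmem.2]⟩).ne'
    rw [hw1 s hmem.1, ← hyx s ⟨by linarith [hmem.1], by linarith [hmem.2]⟩]
    field_simp
  have contI2 : Continuous fun v : ℝ => v * y v * f v - y v * (1 - F (v + μ)) :=
    contvyf.sub (hyc.mul (continuous_const.sub (hFc.comp (continuous_id.add continuous_const))))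
  have hI1 : (∫ v in (0:ℝ)..m, x v * (v - (1 - F (v + μ)) * deriv w v / f v) * f v)
      = ∫ v in (0:ℝ)..m, v * y v * f v := intervalIntegral.integral_congr_ae haeI1
  have hI2 : (∫ v in m..B, x v * (v - (1 - F (v + μ)) * deriv w v / f v) * f v)
      = ∫ v in m..B, (v * y v * f v - y v * (1 - F (v + μ))) := intervalIntegral.integral_congr_ae haeI2
  have hRsplit : (∫ v in (0:ℝ)..B, x v * (v - (1 - F (v + μ)) * deriv w v / f v) * f v)
      = (∫ v in (0:ℝ)..m, x v * (v - (1 - F (v + μ)) * deriv w v / f v) * f v)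
        + ∫ v in m..B, x v * (v - (1 - F (v + μ)) * deriv w v / f v) * f v :=
    (integral_add_adjacent_intervals
      (II_congr (contvyf.intervalIntegrable 0 m) haeI1)
      (II_congr (contI2.intervalIntegrable m B) haeI2)).symm
  have hI2split : (∫ v in m..B, (v * y v * f v - y v * (1 - F (v + μ))))
      = (∫ v in m..B, v * y v * f v) - ∫ v in m..B, y v * (1 - F (v + μ)) :=
    intervalIntegral.integral_sub (contvyf.intervalIntegrable m B)
      ((hyc.mul (continuous_const.sub (hFc.comp (continuous_id.add continuous_const)))).intervalIntegrable m B)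
  -- change of variables
  have hshift : (∫ v in A..C, y (v - μ) * (1 - F v)) = ∫ v in m..B, y v * (1 - F (v + μ)) := by
    have h := intervalIntegral.integral_comp_sub_right (a := A) (b := C)
      (fun u => y u * (1 - F (u + μ))) μ
    simp only [sub_add_cancel] at h
    rw [show A - μ = m from hmdef.symm, show C - μ = B from by rw [hC]; ring] at h
    exact h
  -- adjacency for v * y v * f v
  have ha1 : (∫ v in (0:ℝ)..m, v * y v * f v) + (∫ v in m..B, v * y v * f v)
      = ∫ v in (0:ℝ)..B, v * y v * f v :=
    integral_add_adjacent_intervals (contvyf.intervalIntegrable 0 m)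
      (contvyf.intervalIntegrable m B)
  have ha2 : (∫ v in (0:ℝ)..A, v * y v * f v) + (∫ v in A..C, v * y v * f v)
      = ∫ v in (0:ℝ)..C, v * y v * f v :=
    integral_add_adjacent_intervals (contvyf.intervalIntegrable 0 A)
      (contvyf.intervalIntegrable A C)
  have ha3 : (∫ v in (0:ℝ)..B, v * y v * f v) + (∫ v in B..C, v * y v * f v)
      = ∫ v in (0:ℝ)..C, v * y v * f v :=
    integral_add_adjacent_intervals (contvyf.intervalIntegrable 0 B)
      (contvyf.intervalIntegrable B C)
  have hBCy : (∫ v in B..C, v * y v * f v) = ∫ v in B..C, v * f v := by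
    apply intervalIntegral.integral_congr
    intro v hv
    rw [uIcc_of_le hBC.le] at hv
    beta_reduce
    rw [hy1 v ⟨hv.1, by linarith [hv.2]⟩, mul_one]
  -- split total
  have htfAC : IntervalIntegrable (fun v => t v * f v) volume A C :=
    II_congr (contP2.intervalIntegrable A C)
      (Filter.Eventually.of_forall fun s hs => hP2eq (uIoc_subset_uIcc hs))
  have htf0A : IntervalIntegrable (fun v => t v * f v) volume 0 A :=
    II_congr (contvyf.intervalIntegrable 0 A) haeP1
  have htfCv : IntervalIntegrable (fun v => t v * f v) volume C vbar := by
    apply II_congr (show IntervalIntegrable (fun v => (C + ε - G1 C) * f v) volume C vbar from (continuous_const.mul hfcont).intervalIntegrable C vbar)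
    apply Filter.Eventually.of_forall
    intro s hs
    rw [uIoc_of_le hCv.le] at hs
    rw [htC s ⟨hs.1.le, hs.2⟩]
  have htsplit : (∫ v in (0:ℝ)..vbar, t v * f v)
      = (∫ v in (0:ℝ)..A, t v * f v) + (∫ v in A..C, t v * f v)
        + ∫ v in C..vbar, t v * f v := by
    rw [integral_add_adjacent_intervals htf0A htfAC,
      integral_add_adjacent_intervals (htf0A.trans htfAC) htfCv]
  -- assemble
  rw [htsplit, hP1, hP2, hP3, hRsplit, hI1, hI2]
  have hIG : (∫ v in A..C, G1 v * f v)
      = G1 C * (F C - 1) - ε * (F A - 1) + ∫ v in A..C, y (v - μ) * (1 - F v) := by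
    linarith [hbp1, hbpadd, hnegS]
  linarith [hIG, hshift, hI2split, ha1, ha2, ha3, hBCy, hbp2, hbp2add, hBC1]
end
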